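/- Let q = 2. For every positive integer s, the polynomial ζ(−s, X) := ∑_{d≥0} S_d(s) X^d ∈ (F_2[x])[X] is divisible by X − 1 but not by (X − 1)²; that is, every negative integer −s is a zero of the zeta function of F_2[x] with order of vanishing exactly one. -/

import Mathlib

open Polynomial

/-- `lq q k` is the sum of the base-`q` digits of `k`. -/
def lq (q k : ℕ) : ℕ := (Nat.digits q k).sum

/-- `Spow F d s = ∑_{a monic, deg a = d} a^s ∈ F[x]`, the power sum over all monic polynomials
of degree `d`, realized as the sum over all coefficient tuples `c : Fin d → F`. -/
noncomputable def Spow (F : Type*) [Field F] [Fintype F] (d s : ℕ) : F[X] :=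
  ∑ c : Fin d → F, (X ^ d + ∑ i : Fin d, C (c i) * X ^ (i : ℕ)) ^ s


open Finset

namespace St4

noncomputable def T (N s : ℕ) : (ZMod 2)[X] :=
  ∑ c : Fin N → ZMod 2, (∑ i : Fin N, C (c i) * X ^ (i : ℕ)) ^ s

lemma zmod2_cases (c : ZMod 2) : c = 0 ∨ c = 1 := by revert c; decide

lemma zmod2_pow (c : ZMod 2) {n : ℕ} (hn : n ≠ 0) : c ^ n = c := by
  rcases zmod2_cases c with h | h <;> simp [h, zero_pow hn]

lemma sum_zmod2 {M : Type*} [AddCommMonoid M] (g : ZMod 2 → M) :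
    ∑ v : ZMod 2, g v = g 0 + g 1 := by
  rw [show (univ : Finset (ZMod 2)) = {0, 1} from by decide,
    Finset.sum_insert (by decide), Finset.sum_singleton]

lemma snoc_sum (d : ℕ) (c : Fin d → ZMod 2) (v : ZMod 2) :
    ∑ i : Fin (d+1), C ((Fin.snoc c v : Fin (d+1) → ZMod 2) i) * (X : (ZMod 2)[X]) ^ (i : ℕ)
      = (∑ i : Fin d, C (c i) * X ^ (i : ℕ)) + C v * X ^ d := by
  rw [Fin.sum_univ_castSucc]
  simp [Fin.snoc_castSucc, Fin.snoc_last]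

lemma spow_eq (d s : ℕ) : T (d+1) s = T d s + Spow (ZMod 2) d s := by
  have hb := Fintype.sum_bijective (⇑(Fin.snocEquiv (fun _ : Fin (d+1) => ZMod 2)))
    (Equiv.bijective _)
    (fun p => (∑ i : Fin (d+1), C ((Fin.snocEquiv (fun _ : Fin (d+1) => ZMod 2)) p i)
      * X ^ (i:ℕ)) ^ s)
    (fun c => (∑ i : Fin (d+1), C (c i) * X ^ (i:ℕ)) ^ s) (fun p => rfl)
  rw [T, ← hb, Fintype.sum_prod_type, sum_zmod2]
  simp only [Fin.snocEquiv_apply]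
  simp_rw [snoc_sum]
  congr 1
  · rw [T]
    simp
  · rw [Spow]
    apply Finset.sum_congr rfl
    intro c _
    rw [map_one, one_mul, add_comm]

end St4

namespace St4

lemma sum_prod_eval {N l : ℕ} (f : Fin l → Fin N) :
    ∑ c : Fin N → ZMod 2, ∏ k : Fin l, c (f k)
      = if Function.Surjective f then 1 else 0 := by
  have h1 : ∀ c : Fin N → ZMod 2, ∏ k : Fin l, c (f k)
      = ∏ i : Fin N, (if i ∈ univ.image f then c i else 1) := by
    intro c
    rw [Finset.prod_comp (fun i => c i) f, Finset.prod_ite_mem, Finset.univ_inter]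
    apply Finset.prod_congr rfl
    intro b hb
    obtain ⟨a, _, ha⟩ := Finset.mem_image.1 hb
    exact zmod2_pow _ (Finset.card_ne_zero_of_mem
      (Finset.mem_filter.2 ⟨Finset.mem_univ a, ha⟩))
  simp_rw [h1]
  have h2 := (Finset.prod_univ_sum (fun _ : Fin N => (univ : Finset (ZMod 2)))
    (fun i v => if i ∈ univ.image f then v else 1)).symm
  simp only [Fintype.piFinset_univ] at h2
  rw [h2]
  have h3 : ∀ i : Fin N, (∑ v : ZMod 2, if i ∈ univ.image f then v else 1)
      = if i ∈ univ.image f then 1 else 0 := by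
    intro i
    by_cases hi : i ∈ univ.image f <;> simp [hi] <;> decide
  simp_rw [h3]
  by_cases hs : Function.Surjective f
  · rw [if_pos hs]
    apply Finset.prod_eq_one
    intro i _
    rw [if_pos]
    obtain ⟨a, ha⟩ := hs i
    exact Finset.mem_image.2 ⟨a, Finset.mem_univ a, ha⟩
  · rw [if_neg hs]
    simp only [Function.Surjective, not_forall] at hs
    obtain ⟨b, hb⟩ := hs
    push_neg at hb
    refine Finset.prod_eq_zero (Finset.mem_univ b) ?_
    rw [if_neg]
    intro hmem
    obtain ⟨a, _, ha⟩ := Finset.mem_image.1 hmem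
    exact hb a ha

end St4

namespace St4

lemma T_eq {l : ℕ} (e : Fin l → ℕ) {s : ℕ} (hse : s = ∑ k : Fin l, 2 ^ e k) (N : ℕ) :
    T N s = ∑ f ∈ univ.filter (fun f : Fin l → Fin N => Function.Surjective f),
      (X : (ZMod 2)[X]) ^ (∑ k : Fin l, (f k : ℕ) * 2 ^ e k) := by
  have key : ∀ c : Fin N → ZMod 2,
      (∑ i : Fin N, C (c i) * (X:(ZMod 2)[X]) ^ (i:ℕ)) ^ s
        = ∑ f : Fin l → Fin N,
            (∏ k : Fin l, C (c (f k))) * X ^ (∑ k : Fin l, (f k:ℕ) * 2 ^ e k) := by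
    intro c
    rw [hse, ← Finset.prod_pow_eq_pow_sum]
    have h2 : ∀ k : Fin l, (∑ i : Fin N, C (c i) * (X:(ZMod 2)[X]) ^ (i:ℕ)) ^ 2 ^ e k
        = ∑ i : Fin N, C (c i) * X ^ ((i:ℕ) * 2 ^ e k) := by
      intro k
      rw [sum_pow_char_pow 2]
      apply Finset.sum_congr rfl
      intro i _
      rw [mul_pow, ← map_pow, zmod2_pow _ (Nat.two_pow_pos _).ne', ← pow_mul]
    simp_rw [h2]
    have h4 := Finset.prod_univ_sum (fun _ : Fin l => (univ : Finset (Fin N)))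
      (fun k i => C (c i) * (X:(ZMod 2)[X]) ^ ((i:ℕ) * 2 ^ e k))
    simp only [Fintype.piFinset_univ] at h4
    rw [h4]
    apply Finset.sum_congr rfl
    intro f _
    rw [Finset.prod_mul_distrib, Finset.prod_pow_eq_pow_sum]
  rw [T]
  simp_rw [key]
  rw [Finset.sum_comm]
  have h5 : ∀ f : Fin l → Fin N,
      (∑ c : Fin N → ZMod 2, (∏ k : Fin l, C (c (f k)))
          * (X:(ZMod 2)[X]) ^ (∑ k : Fin l, (f k:ℕ) * 2 ^ e k))
        = (if Function.Surjective f then 1 else 0)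
            * X ^ (∑ k : Fin l, (f k:ℕ) * 2 ^ e k) := by
    intro f
    rw [← Finset.sum_mul]
    congr 1
    rw [show (∑ c : Fin N → ZMod 2, ∏ k : Fin l, C (c (f k)))
        = C (∑ c : Fin N → ZMod 2, ∏ k : Fin l, (c (f k))) by
      rw [map_sum]; exact Finset.sum_congr rfl fun c _ => (map_prod (C : ZMod 2 →+* (ZMod 2)[X]) _ Finset.univ).symm]
    rw [sum_prod_eval f]
    split_ifs <;> simp
  simp_rw [h5]
  rw [Finset.sum_filter]
  apply Finset.sum_congr rfl
  intro f _
  split_ifs <;> simp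

end St4

namespace St4

lemma T_zero {l : ℕ} (e : Fin l → ℕ) {s : ℕ} (hse : s = ∑ k : Fin l, 2 ^ e k)
    {N : ℕ} (hN : l < N) : T N s = 0 := by
  rw [T_eq e hse N]
  apply Finset.sum_eq_zero
  intro f hf
  rw [Finset.mem_filter] at hf
  have := Fintype.card_le_of_surjective f hf.2
  simp only [Fintype.card_fin] at this
  omega

lemma T_zero' {s : ℕ} (hs : 1 ≤ s) : T 0 s = 0 := by
  simp [T, zero_pow (show s ≠ 0 by omega)]

-- char two helpers; R = (ZMod 2)[X]
lemma charTwoR : (2 : (ZMod 2)[X]) = 0 := by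
  exact_mod_cast CharP.cast_eq_zero ((ZMod 2)[X]) 2

lemma telescope (a : ℕ → (ZMod 2)[X]) (n : ℕ) :
    ∑ d ∈ range n, (a (d+1) + a d) = a n + a 0 := by
  induction n with
  | zero => simp only [Finset.range_zero, Finset.sum_empty]; linear_combination (-(a 0)) * charTwoR
  | succ n ih =>
    rw [Finset.sum_range_succ, ih]
    linear_combination (a n) * charTwoR

lemma abel (a : ℕ → (ZMod 2)[X]) (n : ℕ) :
    ∑ d ∈ range n, (d : (ZMod 2)[X]) * (a (d+1) + a d)
      = ((n : (ZMod 2)[X]) + 1) * a n + a 0 + ∑ d ∈ range n, a d := by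
  induction n with
  | zero => simp only [Finset.range_zero, Finset.sum_empty, Nat.cast_zero]; linear_combination (-(a 0)) * charTwoR
  | succ n ih =>
    rw [Finset.sum_range_succ, ih, Finset.sum_range_succ]
    push_cast
    linear_combination ((n : (ZMod 2)[X]) * a n - a (n+1)) * charTwoR

lemma exists_bits {s : ℕ} (hs : 1 ≤ s) :
    ∃ (l : ℕ) (e : Fin l → ℕ), 0 < l ∧ StrictMono e ∧ s = ∑ k : Fin l, 2 ^ e k := by
  refine ⟨s.bitIndices.length, fun k => s.bitIndices.get k, ?_, ?_, ?_⟩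
  · rcases Nat.eq_zero_or_pos s.bitIndices.length with h | h
    · exfalso
      have := Nat.twoPowSum_bitIndices s
      rw [List.length_eq_zero_iff.1 h] at this
      simp at this
      omega
    · exact h
  · exact Nat.bitIndices_sorted.strictMono_get
  · have := Nat.twoPowSum_bitIndices s
    rw [← List.ofFn_getElem_eq_map s.bitIndices (fun i => 2 ^ i), List.sum_ofFn] at this
    exact this.symm

end St4

namespace St4

variable {l : ℕ} {e : Fin l → ℕ}

lemma two_pow_sum_range_lt (n : ℕ) : ∑ j ∈ range n, 2 ^ j < 2 ^ n := by
  induction n with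
  | zero => simp
  | succ n ih =>
    rw [Finset.sum_range_succ, pow_succ]
    omega

lemma sumA (he : StrictMono e) {S : Finset (Fin l)} {b : Fin l}
    (hS : ∀ k ∈ S, k < b) : ∑ k ∈ S, 2 ^ e k < 2 ^ e b := by
  rw [← Finset.sum_image (f := fun j : ℕ => 2 ^ j) (g := e) (fun x _ y _ h => he.injective h)]
  calc ∑ j ∈ S.image e, 2 ^ j ≤ ∑ j ∈ range (e b), 2 ^ j := by
        apply Finset.sum_le_sum_of_subset
        intro j hj
        simp only [Finset.mem_image] at hj
        obtain ⟨k, hk, rfl⟩ := hj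
        exact Finset.mem_range.2 (he (hS k hk))
    _ < 2 ^ e b := two_pow_sum_range_lt _

lemma sigma_lt (he : StrictMono e) {S B : Finset (Fin l)}
    (hup : ∀ a ∈ B, ∀ b : Fin l, a ≤ b → b ∈ B)
    (hcard : S.card ≤ B.card) (hne : S ≠ B) :
    ∑ k ∈ S, 2 ^ e k < ∑ k ∈ B, 2 ^ e k := by
  have hBS : (B \ S).Nonempty := by
    rw [Finset.sdiff_nonempty]
    intro hsub
    exact hne (Finset.eq_of_subset_of_card_le hsub hcard).symm
  obtain ⟨b, hb⟩ := hBS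
  rw [Finset.mem_sdiff] at hb
  have h1 : ∀ k ∈ S \ B, k < b := by
    intro k hk
    rw [Finset.mem_sdiff] at hk
    by_contra h
    exact hk.2 (hup b hb.1 k (le_of_not_gt h))
  have h2 : ∑ k ∈ S \ B, 2 ^ e k < 2 ^ e b := sumA he h1
  have h3 : insert b (S ∩ B) ⊆ B :=
    Finset.insert_subset hb.1 Finset.inter_subset_right
  have h4 : 2 ^ e b + ∑ k ∈ S ∩ B, 2 ^ e k ≤ ∑ k ∈ B, 2 ^ e k := by
    have := Finset.sum_le_sum_of_subset (f := fun k => 2 ^ e k) h3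
    rwa [Finset.sum_insert (fun h => hb.2 (Finset.mem_inter.1 h).1)] at this
  have h5 := Finset.sum_inter_add_sum_sdiff S B (fun k => 2 ^ e k)
  omega

/-- layer cake -/
lemma layer_cake {d : ℕ} (g : Fin l → ℕ) (hg : ∀ k, g k < d) :
    ∑ k, g k * 2 ^ e k
      = ∑ t ∈ range d, ∑ k ∈ univ.filter (fun k => t < g k), 2 ^ e k := by
  have : ∀ t, ∑ k ∈ univ.filter (fun k => t < g k), 2 ^ e k
      = ∑ k : Fin l, if t < g k then 2 ^ e k else 0 := fun t =>
    (Finset.sum_filter _ _)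
  simp_rw [this]
  rw [Finset.sum_comm]
  congr 1
  ext k
  have : (Finset.filter (fun t => t < g k) (range d)) = range (g k) := by
    ext t
    simp only [Finset.mem_filter, Finset.mem_range]
    constructor
    · exact fun h => h.2
    · exact fun h => ⟨lt_trans h (hg k), h⟩
  rw [← Finset.sum_filter, this, Finset.sum_const, Finset.card_range, smul_eq_mul]

end St4

namespace St4

lemma cardA_le_cardB {l d t : ℕ} (f : Fin l → Fin d) (hf : Function.Surjective f)
    (ht : t < d) :
    (univ.filter (fun k : Fin l => t < (f k : ℕ))).card
      ≤ (univ.filter (fun k : Fin l => t < (k : ℕ))).card := by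
  have hfc : t + 1 ≤ (univ.filter (fun k : Fin l => ¬ t < (f k : ℕ))).card := by
    set g : Fin (t+1) → Fin l := fun j => Function.surjInv hf (Fin.castLE ht j) with hg
    have hginj : Function.Injective g := by
      intro j1 j2 h
      have h2 : f (g j1) = f (g j2) := congrArg f h
      simp only [hg, Function.surjInv_eq hf] at h2
      exact Fin.castLE_injective ht h2
    have hsub : univ.image g ⊆ univ.filter (fun k : Fin l => ¬ t < (f k : ℕ)) := by
      intro k hk
      simp only [Finset.mem_image, Finset.mem_univ, true_and] at hk
      obtain ⟨j, rfl⟩ := hk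
      simp only [Finset.mem_filter, Finset.mem_univ, true_and, not_lt, hg,
        Function.surjInv_eq hf]
      exact Nat.lt_succ_iff.1 j.isLt
    calc t + 1 = (univ : Finset (Fin (t+1))).card := by simp
      _ = (univ.image g).card := (Finset.card_image_of_injective _ hginj).symm
      _ ≤ _ := Finset.card_le_card hsub
  have hkc : (univ.filter (fun k : Fin l => ¬ t < (k : ℕ))).card ≤ t + 1 := by
    have := Finset.card_le_card_of_injOn
      (s := univ.filter (fun k : Fin l => ¬ t < (k : ℕ))) (t := Finset.range (t+1))
      (fun k : Fin l => (k : ℕ))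
      (by intro k hk
          simp only [Finset.mem_coe, Finset.mem_filter, Finset.mem_univ, true_and, not_lt] at hk
          simp only [Finset.mem_coe, Finset.mem_range]
          omega)
      (fun k1 _ k2 _ h => Fin.val_injective h)
    simpa using this
  have e1 := Finset.card_filter_add_card_filter_not
    (s := (univ : Finset (Fin l))) (fun k : Fin l => t < (f k : ℕ))
  have e2 := Finset.card_filter_add_card_filter_not
    (s := (univ : Finset (Fin l))) (fun k : Fin l => t < (k : ℕ))
  simp only [Finset.card_univ, Fintype.card_fin] at e1 e2
  omega

lemma weight_eq_iff {l d : ℕ} (hl : 0 < l) {e : Fin l → ℕ} (he : StrictMono e)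
    (f : Fin l → Fin d) (hf : Function.Surjective f)
    (hw : ∑ k, (f k : ℕ) * 2 ^ e k = ∑ k : Fin l, (k : ℕ) * 2 ^ e k) :
    d = l ∧ ∀ k, (f k : ℕ) = (k : ℕ) := by
  have hdl : d ≤ l := by
    have := Fintype.card_le_of_surjective f hf
    simpa using this
  -- layer cake both sides
  rw [layer_cake (e := e) (d := d) (fun k => (f k : ℕ)) (fun k => (f k).isLt),
    layer_cake (e := e) (d := l) (fun k => (k : ℕ)) (fun k => k.isLt)] at hw
  have hup : ∀ t : ℕ, ∀ a ∈ univ.filter (fun k : Fin l => t < (k : ℕ)),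
      ∀ b : Fin l, a ≤ b → b ∈ univ.filter (fun k : Fin l => t < (k : ℕ)) := by
    intro t a ha b hab
    simp only [Finset.mem_filter, Finset.mem_univ, true_and] at ha ⊢
    exact lt_of_lt_of_le ha hab
  have hle : ∀ t ∈ range d,
      ∑ k ∈ univ.filter (fun k : Fin l => t < ((f k : ℕ))), 2 ^ e k
        ≤ ∑ k ∈ univ.filter (fun k : Fin l => t < (k : ℕ)), 2 ^ e k := by
    intro t ht
    rcases eq_or_ne (univ.filter (fun k : Fin l => t < ((f k : ℕ))))
      (univ.filter (fun k : Fin l => t < (k : ℕ))) with h | h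
    · rw [h]
    · exact le_of_lt (sigma_lt he (hup t)
        (cardA_le_cardB f hf (Finset.mem_range.1 ht)) h)
  have hsplit : ∑ t ∈ range l, ∑ k ∈ univ.filter (fun k : Fin l => t < (k : ℕ)), 2 ^ e k
      = ∑ t ∈ range d, ∑ k ∈ univ.filter (fun k : Fin l => t < (k : ℕ)), 2 ^ e k
        + ∑ t ∈ Finset.Ico d l, ∑ k ∈ univ.filter (fun k : Fin l => t < (k : ℕ)), 2 ^ e k := by
    rw [Finset.range_eq_Ico, Finset.range_eq_Ico,
      Finset.sum_Ico_consecutive _ (Nat.zero_le d) hdl]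
  have hsum_le := Finset.sum_le_sum hle
  have heq : ∀ t ∈ range d,
      ∑ k ∈ univ.filter (fun k : Fin l => t < ((f k : ℕ))), 2 ^ e k
        = ∑ k ∈ univ.filter (fun k : Fin l => t < (k : ℕ)), 2 ^ e k := by
    rw [← Finset.sum_eq_sum_iff_of_le hle]
    omega
  have hAB : ∀ t, t < d →
      univ.filter (fun k : Fin l => t < ((f k : ℕ)))
        = univ.filter (fun k : Fin l => t < (k : ℕ)) := by
    intro t ht
    by_contra h
    exact absurd (heq t (Finset.mem_range.2 ht))
      (ne_of_lt (sigma_lt he (hup t) (cardA_le_cardB f hf ht) h))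
  have hiff : ∀ t, t < d → ∀ k : Fin l, (t < (f k : ℕ) ↔ t < (k : ℕ)) := by
    intro t ht k
    have h0 := hAB t ht
    have h1 : (k ∈ univ.filter (fun k : Fin l => t < ((f k : ℕ))))
        = (k ∈ univ.filter (fun k : Fin l => t < (k : ℕ))) := by rw [h0]
    simpa using h1
  have hfk : ∀ k : Fin l, (f k : ℕ) = (k : ℕ) := by
    intro k
    by_contra hne
    rcases Nat.lt_or_ge (f k : ℕ) (k : ℕ) with h | h
    · have := (hiff (f k : ℕ) (f k).isLt k).2 h
      omega
    · have hlt : ((k : ℕ)) < (f k : ℕ) := by omega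
      have htd : (k : ℕ) < d := lt_trans hlt (f k).isLt
      have := (hiff (k : ℕ) htd k).1 hlt
      omega
  refine ⟨?_, hfk⟩
  have hk0 : ((⟨l - 1, by omega⟩ : Fin l) : ℕ) = l - 1 := rfl
  have := hfk ⟨l - 1, by omega⟩
  have hlt := (f ⟨l - 1, by omega⟩).isLt
  omega

end St4

namespace St4

lemma zeta_pieces {s : ℕ} (hs : 1 ≤ s) :
    ∃ (l : ℕ), 0 < l ∧
      (∑ᶠ d : ℕ, Polynomial.C (Spow (ZMod 2) d s) * (X : Polynomial (Polynomial (ZMod 2))) ^ d)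
        = ∑ d ∈ range (l+1), Polynomial.C (Spow (ZMod 2) d s) * X ^ d ∧
      (∑ d ∈ range (l+1), Spow (ZMod 2) d s) = 0 ∧
      (∑ d ∈ range (l+1), Spow (ZMod 2) d s * (d : (ZMod 2)[X])) ≠ 0 := by
  obtain ⟨l, e, hl, he, hse⟩ := exists_bits hs
  have hSpow : ∀ d, Spow (ZMod 2) d s = T (d+1) s + T d s := by
    intro d
    have h := spow_eq d s
    have h2 : T d s + T d s = 0 := by linear_combination (T d s) * charTwoR
    linear_combination - h - h2
  have hTz : ∀ d, l < d → T d s = 0 := fun d hd => T_zero e hse hd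
  refine ⟨l, hl, ?_, ?_, ?_⟩
  · apply finsum_eq_sum_of_support_subset
    intro d hd
    simp only [Function.mem_support, ne_eq] at hd
    by_contra hmem
    apply hd
    simp only [Finset.coe_range, Set.mem_Iio, not_lt] at hmem
    rw [hSpow, hTz d (by omega), hTz (d+1) (by omega)]
    simp
  · calc ∑ d ∈ range (l+1), Spow (ZMod 2) d s
        = ∑ d ∈ range (l+1), (T (d+1) s + T d s) :=
          Finset.sum_congr rfl (fun d _ => hSpow d)
      _ = T (l+1) s + T 0 s := telescope (fun d => T d s) (l+1)
      _ = 0 := by rw [hTz (l+1) (by omega), T_zero' hs, add_zero]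
  · have hW : ∀ d ∈ range (l+1),
        (T d s).coeff (∑ k : Fin l, (k : ℕ) * 2 ^ e k) = if d = l then 1 else 0 := by
      intro d hd
      rw [T_eq e hse d, Polynomial.finset_sum_coeff]
      simp_rw [Polynomial.coeff_X_pow]
      rcases eq_or_ne d l with rfl | hne
      · rw [if_pos rfl]
        rw [Finset.sum_eq_single_of_mem (id : Fin d → Fin d)
          (Finset.mem_filter.2 ⟨Finset.mem_univ _, Function.surjective_id⟩)]
        · simp
        · intro f hf hfne
          rw [Finset.mem_filter] at hf
          rw [if_neg]
          intro hwf
          obtain ⟨-, hfk⟩ := weight_eq_iff hl he f hf.2 hwf.symm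
          exact hfne (funext fun k => Fin.ext (hfk k))
      · rw [if_neg hne]
        apply Finset.sum_eq_zero
        intro f hf
        rw [Finset.mem_filter] at hf
        rw [if_neg]
        intro hwf
        exact hne (weight_eq_iff hl he f hf.2 hwf.symm).1
    have habel : ∑ d ∈ range (l+1), Spow (ZMod 2) d s * (d : (ZMod 2)[X])
        = ∑ d ∈ range (l+1), T d s := by
      calc ∑ d ∈ range (l+1), Spow (ZMod 2) d s * (d : (ZMod 2)[X])
          = ∑ d ∈ range (l+1), (d : (ZMod 2)[X]) * (T (d+1) s + T d s) :=
            Finset.sum_congr rfl (fun d _ => by rw [hSpow, mul_comm])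
        _ = ((l+1 : ℕ) : (ZMod 2)[X]) * T (l+1) s + ((1:(ZMod 2)[X])) * T (l+1) s
              + T 0 s + ∑ d ∈ range (l+1), T d s := by
            rw [abel (fun d => T d s) (l+1)]; ring
        _ = ∑ d ∈ range (l+1), T d s := by
            rw [hTz (l+1) (by omega), T_zero' hs]; ring
    rw [habel]
    intro h0
    have hco := congrArg (fun p : (ZMod 2)[X] => p.coeff (∑ k : Fin l, (k : ℕ) * 2 ^ e k)) h0
    simp only [Polynomial.finset_sum_coeff, Polynomial.coeff_zero] at hco
    rw [Finset.sum_congr rfl hW, Finset.sum_ite_eq' (range (l+1)) l (fun _ => 1),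
      if_pos (Finset.mem_range.2 (by omega))] at hco
    exact one_ne_zero hco

end St4

/-- Let `q = 2`. For every positive integer `s`, the polynomial
`ζ(−s, X) = ∑_{d ≥ 0} S_d(s) X^d ∈ (F_2[x])[X]` is divisible by `X − 1` but not by `(X − 1)²`;
i.e., every negative integer `−s` is a zero of the zeta function of `F_2[x]` with order of
vanishing exactly one. -/
theorem statement4 (s : ℕ) (hs : 1 ≤ s) :
    (X - 1 : Polynomial (Polynomial (ZMod 2))) ∣
        (∑ᶠ d : ℕ, C (Spow (ZMod 2) d s) * X ^ d) ∧
      ¬ (X - 1 : Polynomial (Polynomial (ZMod 2))) ^ 2 ∣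
        (∑ᶠ d : ℕ, C (Spow (ZMod 2) d s) * X ^ d) := by
  obtain ⟨l, hl, hzeta, hsum0, hUne⟩ := St4.zeta_pieces hs
  rw [hzeta]
  have hX1 : (X - 1 : Polynomial (Polynomial (ZMod 2))) = X - C 1 := by rw [map_one]
  constructor
  · rw [hX1, Polynomial.dvd_iff_isRoot, Polynomial.IsRoot, Polynomial.eval_finset_sum]
    simp only [Polynomial.eval_mul, Polynomial.eval_pow, Polynomial.eval_C,
      Polynomial.eval_X, one_pow, mul_one]
    exact hsum0
  · rintro ⟨u, hu⟩
    have h1 : Polynomial.eval 1 (Polynomial.derivative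
        (∑ d ∈ range (l+1), C (Spow (ZMod 2) d s) * X ^ d)) = 0 := by
      rw [hu, Polynomial.derivative_mul, Polynomial.derivative_pow]
      simp [Polynomial.eval_mul, Polynomial.eval_pow]
    have h2 : Polynomial.eval 1 (Polynomial.derivative
        (∑ d ∈ range (l+1), C (Spow (ZMod 2) d s) * X ^ d))
        = ∑ d ∈ range (l+1), Spow (ZMod 2) d s * (d : (ZMod 2)[X]) := by
      rw [Polynomial.derivative_sum, Polynomial.eval_finset_sum]
      apply Finset.sum_congr rfl
      intro d _
      rw [Polynomial.derivative_C_mul_X_pow]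
      simp
    rw [h2] at h1
    exact hUne h1
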